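/- Let δ ≥ 0 and let c : [0,∞) → [0,∞) be measurable such that A(t) := ∫_t^∞ e^{−δ(u−t)} c(u) du satisfies 0 < A(t) < ∞ for every t ≥ 0. Let s_0 ≥ A(0), let 0 = T_0 < T_1 < ... < T_m be times, and let e_1, ..., e_m ≥ 0 be credit transfers. Define s(T_0) := s_0 and recursively, for k = 1, ..., m: r(u) := c(u) · s(T_{k-1})/A(T_{k-1}) for u ∈ [T_{k-1}, T_k) (and r(u) := c(u) · s(T_m)/A(T_m) for u ≥ T_m), and s(T_k) := s(T_{k-1}) e^{δ(T_k − T_{k-1})} − ∫_{T_{k-1}}^{T_k} e^{δ(T_k − u)} r(u) du + e_k. Then for every u ∈ [T_{k-1}, T_k) (taking T_{m+1} = ∞), r(u) − c(u) = c(u) · [(s_0 − A(0))/A(0) + Σ_{l=1}^{k-1} e_l/A(T_l)]; in particular r(u) ≥ c(u) for all u ≥ 0. -/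

import Mathlib

open MeasureTheory Finset

/-- A DA plan dominates any DC plan: rescaling the DC drawdown `c` by the current cash
value in each inter-death period yields DA payments `r` with
`r(u) - c(u) = c(u) [(s₀ - A(0))/A(0) + ∑_{l<k} e_l/A(T_l)] ≥ 0`. -/
theorem stmt_13 (δ : ℝ) (hδ : 0 ≤ δ)
    (c : ℝ → ℝ) (hc_meas : Measurable c) (hc_nn : ∀ u, 0 ≤ c u)
    (hc_int : IntegrableOn (fun u => Real.exp (-δ*u) * c u) (Set.Ioi 0))
    (A : ℝ → ℝ)
    (hA : ∀ t, 0 ≤ t → A t = ∫ u in Set.Ioi t, Real.exp (-δ*(u - t)) * c u)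
    (hApos : ∀ t, 0 ≤ t → 0 < A t)
    (s0 : ℝ) (hs0 : A 0 ≤ s0)
    (m : ℕ) (T : ℕ → ℝ) (hT0 : T 0 = 0)
    (hTmono : ∀ k, k < m → T k < T (k + 1))
    (e : ℕ → ℝ) (he : ∀ k, 1 ≤ k → k ≤ m → 0 ≤ e k)
    (S : ℕ → ℝ) (hS0 : S 0 = s0)
    (r : ℝ → ℝ)
    (hr : ∀ k, 1 ≤ k → k ≤ m → ∀ u, T (k - 1) ≤ u → u < T k →
      r u = c u * S (k - 1) / A (T (k - 1)))
    (hrlast : ∀ u, T m ≤ u → r u = c u * S m / A (T m))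
    (hSrec : ∀ k, 1 ≤ k → k ≤ m →
      S k = S (k - 1) * Real.exp (δ * (T k - T (k - 1)))
        - (∫ u in T (k - 1)..T k, Real.exp (δ * (T k - u)) * r u) + e k) :
    (∀ k, 1 ≤ k → k ≤ m + 1 → ∀ u, T (k - 1) ≤ u → (k ≤ m → u < T k) →
      r u - c u
        = c u * ((s0 - A 0) / A 0 + ∑ l ∈ Finset.Icc 1 (k - 1), e l / A (T l))) ∧
    (∀ u, 0 ≤ u → c u ≤ r u) := by
  have hA0 : A 0 ≠ 0 := (hApos 0 le_rfl).ne'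
  -- T k is nonnegative for k ≤ m
  have hTnn : ∀ k, k ≤ m → 0 ≤ T k := by
    intro k
    induction k with
    | zero => intro _; simp [hT0]
    | succ n ih =>
      intro h
      exact le_of_lt (lt_of_le_of_lt (ih (by omega)) (hTmono n (by omega)))
  -- key step for A
  have hAstep : ∀ a b : ℝ, 0 ≤ a → a ≤ b →
      A a * Real.exp (δ * (b - a)) - (∫ u in a..b, Real.exp (δ*(b-u)) * c u) = A b := by
    intro a b ha hab
    have hb : 0 ≤ b := ha.trans hab
    have h1 : ∀ t : ℝ, 0 ≤ t → A t
        = Real.exp (δ * t) * ∫ u in Set.Ioi t, Real.exp (-δ*u) * c u := by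
      intro t ht
      rw [hA t ht, ← MeasureTheory.integral_const_mul]
      congr 1; ext u
      rw [← mul_assoc, ← Real.exp_add]
      congr 2; ring
    have hint1 : IntegrableOn (fun u => Real.exp (-δ*u) * c u) (Set.Ioc a b) :=
      hc_int.mono_set (fun x hx => lt_of_le_of_lt ha hx.1)
    have hint2 : IntegrableOn (fun u => Real.exp (-δ*u) * c u) (Set.Ioi b) :=
      hc_int.mono_set (Set.Ioi_subset_Ioi hb)
    have hsplit : (∫ u in Set.Ioi a, Real.exp (-δ*u) * c u)
        = (∫ u in Set.Ioc a b, Real.exp (-δ*u) * c u)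
          + ∫ u in Set.Ioi b, Real.exp (-δ*u) * c u := by
      rw [← setIntegral_union (Set.Ioc_disjoint_Ioi le_rfl) measurableSet_Ioi hint1 hint2,
        Set.Ioc_union_Ioi_eq_Ioi hab]
    have h2 : (∫ u in a..b, Real.exp (δ*(b-u)) * c u)
        = Real.exp (δ * b) * ∫ u in Set.Ioc a b, Real.exp (-δ*u) * c u := by
      rw [intervalIntegral.integral_of_le hab, ← MeasureTheory.integral_const_mul]
      congr 1; ext u
      rw [← mul_assoc, ← Real.exp_add]
      congr 2; ring
    have h3 : Real.exp (δ * (b - a)) * Real.exp (δ * a) = Real.exp (δ * b) := by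
      rw [← Real.exp_add]; congr 1; ring
    rw [h1 a ha, h1 b hb, h2, hsplit]
    linear_combination ((∫ u in Set.Ioc a b, Real.exp (-δ*u) * c u)
      + ∫ u in Set.Ioi b, Real.exp (-δ*u) * c u) * h3
  -- the cash value formula
  have hX : ∀ k, k ≤ m →
      S k = A (T k) * (s0 / A 0 + ∑ l ∈ Finset.Icc 1 k, e l / A (T l)) := by
    intro k
    induction k with
    | zero =>
      intro _
      simp only [hS0, hT0]
      rw [show Finset.Icc 1 0 = (∅ : Finset ℕ) by rfl, Finset.sum_empty, add_zero,
        mul_div_cancel₀ s0 hA0]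
    | succ n ih =>
      intro h
      have hn : n ≤ m := by omega
      have hab : T n < T (n+1) := hTmono n (by omega)
      have ha : 0 ≤ T n := hTnn n hn
      have hb : 0 ≤ T (n+1) := hTnn (n+1) h
      have hAa : A (T n) ≠ 0 := (hApos _ ha).ne'
      have hAb : A (T (n+1)) ≠ 0 := (hApos _ hb).ne'
      have hrec := hSrec (n+1) (by omega) h
      simp only [Nat.add_sub_cancel] at hrec
      have hrint : (∫ u in T n..T (n+1), Real.exp (δ * (T (n+1) - u)) * r u)
          = (S n / A (T n)) * ∫ u in T n..T (n+1), Real.exp (δ * (T (n+1) - u)) * c u := by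
        rw [intervalIntegral.integral_of_le hab.le, intervalIntegral.integral_of_le hab.le,
          MeasureTheory.integral_Ioc_eq_integral_Ioo, MeasureTheory.integral_Ioc_eq_integral_Ioo,
          ← MeasureTheory.integral_const_mul]
        apply setIntegral_congr_fun measurableSet_Ioo
        intro u hu
        have := hr (n+1) (by omega) h u (by simpa using hu.1.le) (by simpa using hu.2)
        simp only [Nat.add_sub_cancel] at this
        show Real.exp (δ * (T (n+1) - u)) * r u
          = S n / A (T n) * (Real.exp (δ * (T (n+1) - u)) * c u)
        rw [this]; ring
      have hstep := hAstep (T n) (T (n+1)) ha hab.le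
      set X := s0 / A 0 + ∑ l ∈ Finset.Icc 1 n, e l / A (T l) with hXdef
      have hSdiv : S n / A (T n) = X := by
        rw [ih hn]; exact mul_div_cancel_left₀ X hAa
      have he' : A (T (n+1)) * (e (n+1) / A (T (n+1))) = e (n+1) := by
        field_simp
      rw [hrec, hrint, hSdiv, ih hn, Finset.sum_Icc_succ_top (by omega : 1 ≤ n + 1)]
      linear_combination X * hstep - he'
  -- part 1
  have part1 : ∀ k, 1 ≤ k → k ≤ m + 1 → ∀ u, T (k - 1) ≤ u → (k ≤ m → u < T k) →
      r u - c u
        = c u * ((s0 - A 0) / A 0 + ∑ l ∈ Finset.Icc 1 (k - 1), e l / A (T l)) := by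
    intro k hk1 hk2 u hu1 hu2
    have hgen : r u = c u * S (k-1) / A (T (k-1)) := by
      rcases Nat.lt_or_ge k (m+1) with hkm | hkm
      · exact hr k hk1 (by omega) u hu1 (hu2 (by omega))
      · have hk : k = m + 1 := by omega
        subst hk
        simpa using hrlast u (by simpa using hu1)
    have hk1m : k - 1 ≤ m := by omega
    have hAa : A (T (k-1)) ≠ 0 := (hApos _ (hTnn _ hk1m)).ne'
    rw [hgen, hX (k-1) hk1m]
    field_simp
    ring
  refine ⟨part1, ?_⟩
  intro u hu
  have hnn : ∀ k, k ≤ m →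
      0 ≤ (s0 - A 0) / A 0 + ∑ l ∈ Finset.Icc 1 k, e l / A (T l) := by
    intro k hk
    have h1 : 0 ≤ (s0 - A 0) / A 0 := div_nonneg (by linarith) (hApos 0 le_rfl).le
    have h2 : 0 ≤ ∑ l ∈ Finset.Icc 1 k, e l / A (T l) := by
      apply Finset.sum_nonneg
      intro l hl
      rw [Finset.mem_Icc] at hl
      exact div_nonneg (he l hl.1 (by omega)) (hApos _ (hTnn l (by omega))).le
    linarith
  by_cases hum : T m ≤ u
  · have := part1 (m+1) (by omega) le_rfl u (by simpa using hum) (by omega)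
    simp only [Nat.add_sub_cancel] at this
    nlinarith [hnn m le_rfl, hc_nn u, this]
  · push_neg at hum
    have hex : ∃ k, u < T k := ⟨m, hum⟩
    set k := Nat.find hex with hkdef
    have hks : u < T k := Nat.find_spec hex
    have hkm : k ≤ m := Nat.find_le hum
    have hk1 : 1 ≤ k := by
      by_contra h
      have : k = 0 := by omega
      rw [this, hT0] at hks; linarith
    have hpre : T (k-1) ≤ u := by
      by_contra h
      push_neg at h
      exact absurd (Nat.find_min hex (by omega : k - 1 < k)) (by exact fun hh => hh h)
    have := part1 k hk1 (by omega) u hpre (fun _ => hks)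
    nlinarith [hnn (k-1) (by omega), hc_nn u, this]
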